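/- Let c₀, c₁, c₂, c₃, c₄ be real numbers with c₂ ≠ 0 and c₄ ≠ 0. Then the set {x ∈ ℝ : c₁·x + c₂·expit(c₃ + c₄·x) = c₀} contains at most 3 elements, where expit(t) = 1/(1 + exp(−t)) is the standard logistic function. -/

import Mathlib

lemma four_elts {S : Set ℝ} (h : ¬ S.encard ≤ 3) :
    ∃ a b c d : ℝ, a ∈ S ∧ b ∈ S ∧ c ∈ S ∧ d ∈ S ∧ a < b ∧ b < c ∧ c < d := by
  have h4 : (4 : ℕ∞) ≤ S.encard := by
    rw [not_le] at h
    exact Order.add_one_le_of_lt h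
  obtain ⟨t, hts, ht⟩ := Set.exists_subset_encard_eq h4
  have htf : t.Finite := Set.finite_of_encard_eq_coe (by exact_mod_cast ht)
  have hcard : htf.toFinset.card = 4 := by
    have := Set.Finite.encard_eq_coe_toFinset_card htf
    rw [ht] at this
    exact_mod_cast this.symm
  set F := htf.toFinset with hF
  have hlen : (F.sort (· ≤ ·)).length = 4 := by
    rw [Finset.length_sort, hcard]
  have hsorted := F.sortedLT_sort.pairwise
  have hmem : ∀ x ∈ F.sort (· ≤ ·), x ∈ S := by
    intro x hx
    exact hts (htf.mem_toFinset.mp ((Finset.mem_sort _).mp hx))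
  match hl : F.sort (· ≤ ·), hlen with
  | [a, b, c, d], _ =>
    rw [hl] at hsorted hmem
    simp [List.pairwise_cons] at hsorted
    exact ⟨a, b, c, d, hmem a (by simp), hmem b (by simp), hmem c (by simp),
      hmem d (by simp), by tauto, by tauto, by tauto⟩

lemma expit_deriv_eq {a b : ℝ}
    (h : Real.exp (-a) / (1 + Real.exp (-a))^2 = Real.exp (-b) / (1 + Real.exp (-b))^2) :
    a = b ∨ a + b = 0 := by
  set u := Real.exp (-a) with hu
  set v := Real.exp (-b) with hv
  have hu0 : 0 < u := Real.exp_pos _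
  have hv0 : 0 < v := Real.exp_pos _
  have hu1 : (1 + u) ≠ 0 := by positivity
  have hv1 : (1 + v) ≠ 0 := by positivity
  have h1 : u * (1 + v)^2 = v * (1 + u)^2 := by
    field_simp at h; linarith
  have h2 : (u - v) * (1 - u * v) = 0 := by linear_combination h1
  rcases mul_eq_zero.mp h2 with h3 | h3
  · left
    have : u = v := by linarith
    have := Real.exp_injective (hu ▸ hv ▸ this)
    linarith
  · right
    have huv : u * v = 1 := by linarith
    rw [hu, hv, ← Real.exp_add, Real.exp_eq_one_iff] at huv
    linarith

lemma deriv_f (c₁ c₂ c₃ c₄ : ℝ) (x : ℝ) :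
    HasDerivAt (fun x => c₁ * x + c₂ * (1 / (1 + Real.exp (-(c₃ + c₄ * x)))))
      (c₁ + c₂ * (c₄ * Real.exp (-(c₃ + c₄ * x)) / (1 + Real.exp (-(c₃ + c₄ * x)))^2)) x := by
  have h0 : ∀ y : ℝ, (1 + Real.exp (-(c₃ + c₄ * y))) ≠ 0 := fun y => by positivity
  have ht : HasDerivAt (fun x : ℝ => -(c₃ + c₄ * x)) (-c₄) x := by
    exact ((hasDerivAt_const x c₃).add ((hasDerivAt_id x).const_mul c₄)).neg.congr_deriv (by ring)
  have he : HasDerivAt (fun x : ℝ => 1 + Real.exp (-(c₃ + c₄ * x)))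
      (Real.exp (-(c₃ + c₄ * x)) * (-c₄)) x :=
    ((hasDerivAt_const x 1).add (ht.exp)).congr_deriv (by ring)
  have hi := (he.inv (h0 x))
  have hlin : HasDerivAt (fun x : ℝ => c₁ * x) c₁ x := by
    simpa using (hasDerivAt_id x).const_mul c₁
  have := hlin.add (hi.const_mul c₂)
  have hfun : (fun x => c₁ * x + c₂ * (1 / (1 + Real.exp (-(c₃ + c₄ * x))))) =
      ((fun x => c₁ * x) + fun y => c₂ * (fun x => 1 + Real.exp (-(c₃ + c₄ * x)))⁻¹ y) := by
    funext y; simp only [Pi.add_apply, Pi.inv_apply, one_div]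
  rw [hfun]; refine this.congr_deriv ?_
  · ring

/-- A linear function plus a nonzero multiple of a nondegenerate logistic (expit)
function takes any given value at most 3 times: the solution set of
`c₁·x + c₂·expit(c₃ + c₄·x) = c₀` has at most 3 elements when `c₂ ≠ 0` and `c₄ ≠ 0`. -/
theorem linear_plus_expit_level_set_encard_le_three
    (c₀ c₁ c₂ c₃ c₄ : ℝ) (hc₂ : c₂ ≠ 0) (hc₄ : c₄ ≠ 0) :
    {x : ℝ | c₁ * x + c₂ * (1 / (1 + Real.exp (-(c₃ + c₄ * x)))) = c₀}.encard ≤ 3 := by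
  by_contra h
  obtain ⟨a, b, c, d, ha, hb, hc, hd, hab, hbc, hcd⟩ := four_elts h
  set f : ℝ → ℝ := fun x => c₁ * x + c₂ * (1 / (1 + Real.exp (-(c₃ + c₄ * x)))) with hf
  set f' : ℝ → ℝ := fun x =>
    c₁ + c₂ * (c₄ * Real.exp (-(c₃ + c₄ * x)) / (1 + Real.exp (-(c₃ + c₄ * x)))^2) with hf'
  have hderiv : ∀ x : ℝ, HasDerivAt f (f' x) x := fun x => deriv_f c₁ c₂ c₃ c₄ x
  have hcont : Continuous f := by
    rw [continuous_iff_continuousAt]; exact fun x => (hderiv x).continuousAt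
  -- Rolle between consecutive roots
  have rolle : ∀ u v : ℝ, u < v → f u = c₀ → f v = c₀ → ∃ y ∈ Set.Ioo u v, f' y = 0 := by
    intro u v huv hu hv
    exact exists_hasDerivAt_eq_zero huv hcont.continuousOn (by rw [hu, hv])
      (fun y _ => hderiv y)
  obtain ⟨y₁, hy₁, hz₁⟩ := rolle a b hab ha hb
  obtain ⟨y₂, hy₂, hz₂⟩ := rolle b c hbc hb hc
  obtain ⟨y₃, hy₃, hz₃⟩ := rolle c d hcd hc hd
  have h12 : y₁ < y₂ := lt_trans hy₁.2 hy₂.1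
  have h23 : y₂ < y₃ := lt_trans hy₂.2 hy₃.1
  -- From f' y = 0, derive the equality of the sigmoid-derivative values
  have key : ∀ y z : ℝ, f' y = 0 → f' z = 0 →
      Real.exp (-(c₃ + c₄ * y)) / (1 + Real.exp (-(c₃ + c₄ * y)))^2 =
      Real.exp (-(c₃ + c₄ * z)) / (1 + Real.exp (-(c₃ + c₄ * z)))^2 := by
    intro y z hy hz
    simp only [hf'] at hy hz
    have hne : c₂ * c₄ ≠ 0 := mul_ne_zero hc₂ hc₄
    have : c₂ * c₄ * (Real.exp (-(c₃ + c₄ * y)) / (1 + Real.exp (-(c₃ + c₄ * y)))^2) =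
        c₂ * c₄ * (Real.exp (-(c₃ + c₄ * z)) / (1 + Real.exp (-(c₃ + c₄ * z)))^2) := by
      have e1 : c₂ * (c₄ * Real.exp (-(c₃ + c₄ * y)) / (1 + Real.exp (-(c₃ + c₄ * y)))^2) = -c₁ := by
        linarith
      have e2 : c₂ * (c₄ * Real.exp (-(c₃ + c₄ * z)) / (1 + Real.exp (-(c₃ + c₄ * z)))^2) = -c₁ := by
        linarith
      calc c₂ * c₄ * (Real.exp (-(c₃ + c₄ * y)) / (1 + Real.exp (-(c₃ + c₄ * y)))^2)
          = c₂ * (c₄ * Real.exp (-(c₃ + c₄ * y)) / (1 + Real.exp (-(c₃ + c₄ * y)))^2) := by ring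
        _ = c₂ * (c₄ * Real.exp (-(c₃ + c₄ * z)) / (1 + Real.exp (-(c₃ + c₄ * z)))^2) := by
            rw [e1, e2]
        _ = c₂ * c₄ * (Real.exp (-(c₃ + c₄ * z)) / (1 + Real.exp (-(c₃ + c₄ * z)))^2) := by ring
    exact mul_left_cancel₀ hne this
  have k12 := expit_deriv_eq (key y₁ y₂ hz₁ hz₂)
  have k13 := expit_deriv_eq (key y₁ y₃ hz₁ hz₃)
  have hy12 : c₃ + c₄ * y₁ ≠ c₃ + c₄ * y₂ := by
    intro hEq
    have : y₁ = y₂ := by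
      have := mul_left_cancel₀ hc₄ (by linarith : c₄ * y₁ = c₄ * y₂)
      exact this
    linarith
  have s12 : (c₃ + c₄ * y₁) + (c₃ + c₄ * y₂) = 0 := k12.resolve_left hy12
  have hy13 : c₃ + c₄ * y₁ ≠ c₃ + c₄ * y₃ := by
    intro hEq
    have : y₁ = y₃ := mul_left_cancel₀ hc₄ (by linarith : c₄ * y₁ = c₄ * y₃)
    linarith
  have s13 : (c₃ + c₄ * y₁) + (c₃ + c₄ * y₃) = 0 := k13.resolve_left hy13
  have : c₄ * y₂ = c₄ * y₃ := by linarith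
  have : y₂ = y₃ := mul_left_cancel₀ hc₄ this
  linarith
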